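/- (Growth lemma) Let {A(k)}_{k≥0} be a sequence of real numbers with A(0) = 0 such that for each k ≥ 1, 2A(k) − A(k−1) − A(k+1) ≤ C·exp(−A(k)) for some constant C > 0. Then either A(k) ≤ 2·log(k·√(C/2) + 1) for every k ≥ 0, or liminf_{k→∞} A(k)/k > 0. -/

import Mathlib

open Filter Topology

/-- Barrier inequality: the function `x ↦ 2 log x` is "superharmonic enough". -/
lemma barrier_ineq (C b x : ℝ) (hb : 0 < b) (hb2 : b ^ 2 = C / 2) (h1 : 0 < x - b) :
    C * Real.exp (-(2 * Real.log x)) ≤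
      2 * (2 * Real.log x) - 2 * Real.log (x - b) - 2 * Real.log (x + b) := by
  have hx0 : 0 < x := by linarith
  have hxb : 0 < x + b := by linarith
  have hprod : 0 < x ^ 2 - b ^ 2 := by nlinarith
  have hexp : Real.exp (-(2 * Real.log x)) = (x ^ 2)⁻¹ := by
    have h : -(2 * Real.log x) = Real.log ((x ^ 2)⁻¹) := by
      rw [Real.log_inv, Real.log_pow]; push_cast; ring
    rw [h, Real.exp_log (by positivity)]
  have hlog : Real.log (x - b) + Real.log (x + b) = Real.log (x ^ 2 - b ^ 2) := by
    rw [← Real.log_mul h1.ne' hxb.ne']; congr 1; ring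
  have hkey : Real.log ((x ^ 2 - b ^ 2) / x ^ 2) ≤ (x ^ 2 - b ^ 2) / x ^ 2 - 1 :=
    Real.log_le_sub_one_of_pos (by positivity)
  have hdiv : Real.log ((x ^ 2 - b ^ 2) / x ^ 2) =
      Real.log (x ^ 2 - b ^ 2) - Real.log (x ^ 2) := Real.log_div hprod.ne' (by positivity)
  have hlogx2 : Real.log (x ^ 2) = 2 * Real.log x := by
    rw [Real.log_pow]; push_cast; ring
  have hfrac : (x ^ 2 - b ^ 2) / x ^ 2 - 1 = -(b ^ 2 / x ^ 2) := by
    field_simp; ring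
  have hC2 : C * (x ^ 2)⁻¹ = 2 * (b ^ 2 / x ^ 2) := by
    rw [hb2]; field_simp
  rw [hexp, hC2]
  have : Real.log (x ^ 2 - b ^ 2) ≤ 2 * Real.log x - b ^ 2 / x ^ 2 := by
    have := hkey
    rw [hdiv, hlogx2, hfrac] at this
    linarith
  linarith [hlog, this]

/-- **Growth lemma** (Polterovich–Sodin). Let `{A(k)}_{k≥0}` be a sequence of real numbers
with `A(0) = 0` such that for each `k ≥ 1`,
`2A(k) − A(k−1) − A(k+1) ≤ C·exp(−A(k))` for some constant `C > 0`. Then either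
`A(k) ≤ 2·log(k·√(C/2) + 1)` for every `k ≥ 0`, or `liminf_{k→∞} A(k)/k > 0`. -/
theorem growth_lemma (A : ℕ → ℝ) (C : ℝ) (hC : 0 < C) (hA0 : A 0 = 0)
    (hrec : ∀ k : ℕ, 1 ≤ k → 2 * A k - A (k - 1) - A (k + 1) ≤ C * Real.exp (-A k)) :
    (∀ k : ℕ, A k ≤ 2 * Real.log ((k : ℝ) * Real.sqrt (C / 2) + 1)) ∨
      (0 : EReal) < liminf (fun k : ℕ => ((A k / (k : ℝ) : ℝ) : EReal)) atTop := by
  classical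
  set b := Real.sqrt (C / 2) with hbdef
  have hb : 0 < b := Real.sqrt_pos.mpr (by linarith)
  have hb2 : b ^ 2 = C / 2 := Real.sq_sqrt (by linarith)
  set B : ℕ → ℝ := fun k => 2 * Real.log ((k : ℝ) * b + 1) with hB
  have hBnn : ∀ k : ℕ, 0 ≤ B k := by
    intro k
    have hk : (0:ℝ) ≤ (k : ℝ) * b := mul_nonneg (Nat.cast_nonneg k) hb.le
    have : (0:ℝ) ≤ Real.log ((k : ℝ) * b + 1) := Real.log_nonneg (by linarith)
    simpa [hB] using by linarith
  by_cases hcase : ∀ k : ℕ, A k ≤ B k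
  · exact Or.inl fun k => hcase k
  · right
    push_neg at hcase
    have hex : ∃ m, B m < A m := by
      obtain ⟨m, hm⟩ := hcase; exact ⟨m, hm⟩
    set m := Nat.find hex with hmdef
    have hm : B m < A m := Nat.find_spec hex
    have hmin : ∀ j < m, A j ≤ B j := fun j hj => not_lt.mp (Nat.find_min hex hj)
    have hm1 : 1 ≤ m := by
      by_contra h
      have hm0 : m = 0 := by omega
      rw [hm0] at hm
      have : B 0 = 0 := by simp [hB]
      rw [this, hA0] at hm
      exact lt_irrefl 0 hm
    obtain ⟨p, hp⟩ : ∃ p, m = p + 1 := ⟨m - 1, by omega⟩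
    set δ : ℝ := (A (p + 1) - A p) - (B (p + 1) - B p) with hδdef
    have hδ : 0 < δ := by
      have h1 : B (p + 1) < A (p + 1) := by rw [← hp]; exact hm
      have h2 : A p ≤ B p := hmin p (by omega)
      simp only [hδdef]; linarith
    -- barrier inequality in terms of B
    have hbar : ∀ n : ℕ, C * Real.exp (-(B (n + 1))) ≤
        2 * B (n + 1) - B n - B (n + 2) := by
      intro n
      have h1 : (0:ℝ) < ((n:ℝ) + 1) * b + 1 - b := by
        have : (0:ℝ) ≤ (n:ℝ) * b := by positivity
        nlinarith
      have := barrier_ineq C b (((n:ℝ) + 1) * b + 1) hb hb2 h1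
      have e1 : ((n:ℝ) + 1) * b + 1 - b = (n : ℝ) * b + 1 := by ring
      have e2 : ((n:ℝ) + 1) * b + 1 + b = ((n:ℝ) + 2) * b + 1 := by ring
      rw [e1, e2] at this
      simpa [hB] using by push_cast; linarith [this]
    -- main comparison induction
    have main : ∀ n : ℕ, B (p + n + 1) ≤ A (p + n + 1) ∧
        B (p + n + 1) - B (p + n) + δ ≤ A (p + n + 1) - A (p + n) := by
      intro n
      induction n with
      | zero =>
        refine ⟨?_, ?_⟩
        · simpa using le_of_lt (hp ▸ hm)
        · simp only [hδdef, Nat.add_zero]; linarith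
      | succ n ih =>
        obtain ⟨h1, h2⟩ := ih
        have hrec' := hrec (p + n + 1) (by omega)
        have hsub : p + n + 1 - 1 = p + n := by omega
        rw [hsub] at hrec'
        have hexp : C * Real.exp (-A (p + n + 1)) ≤ C * Real.exp (-(B (p + n + 1))) := by
          have : -A (p + n + 1) ≤ -(B (p + n + 1)) := by linarith
          exact mul_le_mul_of_nonneg_left (Real.exp_le_exp.mpr this) hC.le
        have hbar' := hbar (p + n)
        have hD : B (p + n + 2) - B (p + n + 1) + δ ≤ A (p + n + 2) - A (p + n + 1) := by
          linarith
        constructor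
        · have : B (p + (n + 1) + 1) = B (p + n + 2) := by ring_nf
          have hA2 : A (p + (n + 1) + 1) = A (p + n + 2) := by ring_nf
          rw [this, hA2]
          linarith
        · have e1 : p + (n + 1) + 1 = p + n + 2 := by omega
          have e2 : p + (n + 1) = p + n + 1 := by omega
          rw [e1, e2]
          exact hD
    -- linear growth
    have grow : ∀ n : ℕ, B (p + n + 1) + (n : ℝ) * δ ≤ A (p + n + 1) := by
      intro n
      induction n with
      | zero => simpa using (main 0).1
      | succ n ih =>
        have h2 := (main (n + 1)).2
        have e1 : p + (n + 1) + 1 = p + n + 2 := by omega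
        have e2 : p + (n + 1) = p + n + 1 := by omega
        rw [e1, e2] at h2
        push_cast
        show B (p + n + 2) + ((n:ℝ) + 1) * δ ≤ A (p + n + 2)
        linarith
    -- eventual bound on A k / k
    have hev : ∀ k : ℕ, 2 * p + 2 ≤ k → δ / 2 ≤ A k / (k : ℝ) := by
      intro k hk
      obtain ⟨n, rfl⟩ : ∃ n, k = p + n + 1 := ⟨k - (p + 1), by omega⟩
      have hn : p + 1 ≤ n := by omega
      have hg := grow n
      have hBnn' := hBnn (p + n + 1)
      have hkpos : (0:ℝ) < ((p + n + 1 : ℕ) : ℝ) := by positivity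
      rw [le_div_iff₀ hkpos]
      have hcast : ((p + n + 1 : ℕ) : ℝ) = (p : ℝ) + (n : ℝ) + 1 := by push_cast; ring
      rw [hcast]
      have hncast : (p : ℝ) + 1 ≤ (n : ℝ) := by exact_mod_cast hn
      nlinarith [hδ.le]
    -- conclude on EReal liminf
    have hle : (↑(δ / 2) : EReal) ≤ liminf (fun k : ℕ => ((A k / (k : ℝ) : ℝ) : EReal)) atTop := by
      refine Filter.le_liminf_of_le (by isBoundedDefault) ?_
      filter_upwards [Filter.eventually_ge_atTop (2 * p + 2)] with k hk
      exact_mod_cast hev k hk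
    have h0 : (0 : EReal) < (↑(δ / 2) : EReal) := by
      exact_mod_cast (by linarith : (0:ℝ) < δ / 2)
    exact lt_of_lt_of_le h0 hle
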